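/- Let T be a locally finite tree, A and B finitely supported antisymmetric ℤ-valued functions on oriented edges of T with values of all path-sums in {-1,0,1}, and τ a finite subtree containing the supports of both A and B. Then the following are equivalent: (1) there exist bi-infinite proper edge paths c, c' in T with c·A = 1 = c·B and c'·A = 1 = -c'·B; (2) there exist finite edge paths ξ, ξ' in τ with endpoints on ∂τ such that ξ·A = 1 = ξ·B and ξ'·A = 1 = -ξ'·B, provided T has no terminal vertices. -/

import Mathlib

/-- A bi-infinite proper edge path in a graph. -/
def IsProperBiInfPath {V : Type*} (G : SimpleGraph V) (c : ℤ → V) : Prop :=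
  (∀ n : ℤ, G.Adj (c n) (c (n + 1))) ∧
    ∀ S : Finset V, ∃ N : ℕ, ∀ n : ℤ, (N : ℤ) ≤ |n| → c n ∉ S

open SimpleGraph

namespace TreeDisj

variable {V : Type*} {G : SimpleGraph V}

/-- Sum of an edge function along a walk. -/
def wSum (A : V × V → ℤ) {u v : V} (w : G.Walk u v) : ℤ :=
  (w.darts.map fun d => A d.toProd).sum

@[simp] lemma wSum_nil (A : V × V → ℤ) (u : V) :
    wSum A (Walk.nil : G.Walk u u) = 0 := rfl

lemma wSum_cons (A : V × V → ℤ) {u x v : V} (h : G.Adj u x) (p : G.Walk x v) :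
    wSum A (Walk.cons h p) = A (u, x) + wSum A p := by
  simp [wSum]

lemma wSum_append (A : V × V → ℤ) {u v w : V} (p : G.Walk u v) (q : G.Walk v w) :
    wSum A (p.append q) = wSum A p + wSum A q := by
  simp [wSum, Walk.darts_append]

lemma wSum_concat (A : V × V → ℤ) {u v w : V} (p : G.Walk u v) (h : G.Adj v w) :
    wSum A (p.concat h) = wSum A p + A (v, w) := by
  simp [Walk.concat_eq_append, wSum_append, wSum_cons]

lemma path_eq (hT : G.IsTree) {u v : V} {p q : G.Walk u v}
    (hp : p.IsPath) (hq : q.IsPath) : p = q := by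
  have := (SimpleGraph.isAcyclic_iff_path_unique.mp hT.IsAcyclic) ⟨p, hp⟩ ⟨q, hq⟩
  exact congrArg Subtype.val this

lemma path_length_eq_dist (hT : G.IsTree) {u v : V} {p : G.Walk u v}
    (hp : p.IsPath) : p.length = G.dist u v := by
  obtain ⟨q, hq, hlen⟩ := Reachable.exists_path_of_dist ⟨p⟩
  rw [path_eq hT hp hq, hlen]

/-- A canonical path between two vertices of a connected graph. -/
noncomputable def pathTo (hc : G.Connected) (v₀ v : V) : G.Walk v₀ v :=
  letI : DecidableEq V := Classical.decEq V
  (Classical.choice (hc.preconnected v₀ v)).bypass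

lemma pathTo_isPath (hc : G.Connected) (v₀ v : V) : (pathTo hc v₀ v).IsPath := by
  letI : DecidableEq V := Classical.decEq V
  exact Walk.bypass_isPath _

/-- Potential function of an antisymmetric edge function. -/
noncomputable def pot (hc : G.Connected) (A : V × V → ℤ) (v₀ v : V) : ℤ :=
  wSum A (pathTo hc v₀ v)

lemma pot_adj (hT : G.IsTree) (A : V × V → ℤ)
    (hanti : ∀ a b : V, A (a, b) = -A (b, a)) (v₀ : V) {u x : V} (h : G.Adj u x) :
    pot hT.isConnected A v₀ x = pot hT.isConnected A v₀ u + A (u, x) := by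
  classical
  set hc := hT.isConnected
  set q := pathTo hc v₀ u with hq
  by_cases hx : x ∈ q.support
  · have ht : (q.takeUntil x hx).IsPath := (pathTo_isPath hc v₀ u).takeUntil hx
    have hd : (q.dropUntil x hx).IsPath := (pathTo_isPath hc v₀ u).dropUntil hx
    have hedge : (Walk.cons h.symm Walk.nil : G.Walk x u).IsPath := by
      rw [Walk.cons_isPath_iff]
      refine ⟨Walk.IsPath.nil, by simp [h.ne']⟩
    have hdrop : q.dropUntil x hx = Walk.cons h.symm Walk.nil := path_eq hT hd hedge
    have htake : q.takeUntil x hx = pathTo hc v₀ x := path_eq hT ht (pathTo_isPath hc v₀ x)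
    have hspec := q.take_spec hx
    have h1 : pot hc A v₀ u = pot hc A v₀ x + A (x, u) := by
      show wSum A q = _
      rw [← hspec, wSum_append, htake, hdrop, wSum_cons]
      simp [pot]
    rw [h1, hanti x u]; ring
  · have hcon : (q.concat h).IsPath := by
      rw [← Walk.isPath_reverse_iff, Walk.reverse_concat]
      refine ((pathTo_isPath hc v₀ u).reverse).cons ?_
      simpa [Walk.support_reverse] using hx
    have heq : q.concat h = pathTo hc v₀ x := path_eq hT hcon (pathTo_isPath hc v₀ x)
    have : pot hc A v₀ x = wSum A (q.concat h) := by rw [heq]; rfl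
    rw [this, wSum_concat]; rfl

lemma finsum_telescope (F g : ℤ → ℤ) (a b : ℤ) (hab : a ≤ b)
    (hg : ∀ n, g n = F (n + 1) - F n)
    (h0 : ∀ n, b ≤ n → g n = 0) (h1 : ∀ n, n < a → g n = 0) :
    ∑ᶠ n, g n = F b - F a := by
  classical
  set K := (b - a).toNat with hK
  have hKb : a + (K : ℤ) = b := by omega
  have hinj : Function.Injective (fun i : ℕ => a + (i : ℤ)) := by
    intro i j hij
    simpa using hij
  set e : ℕ ↪ ℤ := ⟨fun i : ℕ => a + (i : ℤ), hinj⟩ with he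
  set s : Finset ℤ := (Finset.range K).map e with hs
  have hsupp : Function.support g ⊆ ↑s := by
    intro n hn
    have ha : a ≤ n := by
      by_contra h
      exact hn (h1 n (by omega))
    have hb : n < b := by
      by_contra h
      exact hn (h0 n (by omega))
    rw [hs, Finset.coe_map]
    refine ⟨(n - a).toNat, ?_, ?_⟩
    · simp only [Finset.mem_coe, Finset.mem_range]
      omega
    · show a + ((n - a).toNat : ℤ) = n
      omega
  rw [finsum_eq_sum_of_support_subset g hsupp, hs, Finset.sum_map]
  have hterm : ∀ i ∈ Finset.range K, g (e i) =
      F (a + ((i + 1 : ℕ) : ℤ)) - F (a + (i : ℤ)) := by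
    intro i _
    show g (a + (i : ℤ)) = _
    rw [hg (a + (i : ℤ))]
    congr 2
    push_cast
    ring
  rw [Finset.sum_congr rfl hterm,
    Finset.sum_range_sub (fun i : ℕ => F (a + (i : ℤ))) K]
  rw [hKb]
  norm_num

lemma exists_ray (hT : G.IsTree) [inst : ∀ v : V, Fintype (G.neighborSet v)]
    (hdeg : ∀ v : V, 2 ≤ G.degree v) (τ : Finset V)
    (hτconn : (G.induce (τ : Set V)).Connected)
    {u w : V} (hu : u ∈ τ) (hw : w ∉ τ) (huw : G.Adj u w) :
    ∃ r : ℕ → V, r 0 = u ∧ r 1 = w ∧ (∀ k, G.Adj (r k) (r (k + 1))) ∧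
      (∀ k, G.dist u (r k) = k) ∧ ∀ k, 1 ≤ k → r k ∉ τ := by
  classical
  have hnext : ∀ x a : V, ∃ y, G.Adj x y ∧ y ≠ a := by
    intro x a
    have h2 : 2 ≤ (G.neighborFinset x).card := by
      rw [G.card_neighborFinset_eq_degree]
      exact hdeg x
    have hne : ((G.neighborFinset x).erase a).Nonempty := by
      rw [← Finset.card_pos]
      by_cases ha : a ∈ G.neighborFinset x
      · rw [Finset.card_erase_of_mem ha]; omega
      · rw [Finset.erase_eq_of_notMem ha]; omega
    obtain ⟨y, hy⟩ := hne
    exact ⟨y, by simpa using Finset.mem_of_mem_erase hy, Finset.ne_of_mem_erase hy⟩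
  choose nxt hnxt1 hnxt2 using hnext
  let s : ℕ → V × V := fun k => Nat.rec (u, w) (fun _ p => (p.2, nxt p.2 p.1)) k
  let r : ℕ → V := fun k => (s k).1
  have hr0 : r 0 = u := rfl
  have hr1w : r 1 = w := rfl
  have hrsucc : ∀ k, r (k + 2) = nxt (r (k + 1)) (r k) := fun k => rfl
  have hadj : ∀ k, G.Adj (r k) (r (k + 1)) := by
    intro k
    cases k with
    | zero => exact huw
    | succ k =>
      rw [hrsucc]
      have := hnxt1 (r (k + 1)) (r k)
      simpa [SimpleGraph.mem_neighborFinset] using this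
  have hne2 : ∀ k, r (k + 2) ≠ r k := fun k => by rw [hrsucc]; exact hnxt2 _ _
  -- the canonical walk along r
  let W : ∀ k, G.Walk u (r k) := fun k =>
    Nat.rec Walk.nil (fun k Wk => Wk.concat (hadj k)) k
  have hW : ∀ k, W (k + 1) = (W k).concat (hadj k) := fun k => rfl
  have hWlen : ∀ k, (W k).length = k := by
    intro k
    induction k with
    | zero => rfl
    | succ k ih => rw [hW, Walk.length_concat, ih]
  have hWsup : ∀ k i, i ≤ k → r i ∈ (W k).support := by
    intro k
    induction k with
    | zero =>
      intro i hi
      interval_cases i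
      show r 0 ∈ (Walk.nil : G.Walk u u).support
      simp [hr0]
    | succ k ih =>
      intro i hi
      rw [hW, Walk.support_concat, List.mem_append]
      rcases Nat.lt_or_ge i (k + 1) with h | h
      · exact Or.inl (ih i (by omega))
      · have : i = k + 1 := by omega
        subst this
        exact Or.inr (List.mem_singleton.mpr rfl)
  have hWpath : ∀ k, (W k).IsPath := by
    intro k
    induction k with
    | zero => exact Walk.IsPath.nil
    | succ k ih =>
      have hnot : r (k + 1) ∉ (W k).support := by
        intro hmem
        cases k with
        | zero =>
          have hmem' : r 1 ∈ (Walk.nil : G.Walk u u).support := hmem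
          have : r 1 = u := by simpa using hmem'
          exact huw.ne' (hr1w ▸ this)
        | succ j =>
          have hd : ((W (j + 1)).dropUntil _ hmem).IsPath := ih.dropUntil hmem
          have hedge : (Walk.cons (hadj (j + 1)).symm Walk.nil :
              G.Walk (r (j + 2)) (r (j + 1))).IsPath := by
            rw [Walk.cons_isPath_iff]
            exact ⟨Walk.IsPath.nil, by simp [(hadj (j + 1)).ne']⟩
          have hdrop : (W (j + 1)).dropUntil _ hmem =
              Walk.cons (hadj (j + 1)).symm Walk.nil := path_eq hT hd hedge
          have hWeq : W (j + 1) =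
              ((W (j + 1)).takeUntil _ hmem).concat (hadj (j + 1)).symm := by
            conv_lhs => rw [← (W (j + 1)).take_spec hmem]
            rw [hdrop, Walk.concat_eq_append]
          have e1 : (W (j + 1)).reverse.getVert 1 = r j := by
            rw [hW j, Walk.reverse_concat]
            simp [Walk.getVert_cons_succ, Walk.getVert_zero]
          have e2 : (W (j + 1)).reverse.getVert 1 = r (j + 2) := by
            conv_lhs => rw [hWeq]
            rw [Walk.reverse_concat]
            simp [Walk.getVert_cons_succ, Walk.getVert_zero]
          exact hne2 j (e2.symm.trans e1)
      rw [hW, ← Walk.isPath_reverse_iff, Walk.reverse_concat]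
      exact ih.reverse.cons (by simpa [Walk.support_reverse] using hnot)
  have hdist : ∀ k, G.dist u (r k) = k := by
    intro k
    rw [← path_length_eq_dist hT (hWpath k), hWlen]
  have hout : ∀ k, 1 ≤ k → r k ∉ τ := by
    intro k hk hkτ
    obtain ⟨P⟩ := hτconn.preconnected ⟨u, hu⟩ ⟨r k, hkτ⟩
    let f : G.induce (τ : Set V) →g G :=
      ⟨Subtype.val, fun {a b} hab => hab⟩
    let Q := (P.map f).bypass
    have hQs : ∀ x ∈ Q.support, x ∈ τ := by
      intro x hx
      have hx' := Walk.support_bypass_subset _ hx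
      rw [Walk.support_map, List.mem_map] at hx'
      obtain ⟨⟨y, hy⟩, _, rfl⟩ := hx'
      exact hy
    have hQW : Q = W k := path_eq hT (Walk.bypass_isPath _) (hWpath k)
    have hwQ : w ∈ Q.support := by
      rw [hQW]
      exact hr1w ▸ hWsup k 1 hk
    exact hw (hQs w hwQ)
  exact ⟨r, hr0, hr1w, hadj, hdist, hout⟩

lemma boundary_proj (hT : G.IsTree) (A B : V × V → ℤ)
    (hantiA : ∀ a b : V, A (a, b) = -A (b, a))
    (hantiB : ∀ a b : V, B (a, b) = -B (b, a))
    (τ : Finset V)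
    (hsuppA : ∀ u v : V, A (u, v) ≠ 0 → G.Adj u v ∧ u ∈ τ ∧ v ∈ τ)
    (hsuppB : ∀ u v : V, B (u, v) ≠ 0 → G.Adj u v ∧ u ∈ τ ∧ v ∈ τ)
    (v₀ t₀ : V) (ht₀ : t₀ ∈ τ) {u : V} (hu : u ∉ τ) :
    ∃ u' ∈ τ, (∃ w, w ∉ τ ∧ G.Adj u' w) ∧
      pot hT.isConnected A v₀ u' = pot hT.isConnected A v₀ u ∧
      pot hT.isConnected B v₀ u' = pot hT.isConnected B v₀ u := by
  classical
  obtain ⟨P⟩ := hT.isConnected.preconnected u t₀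
  have hex : ∃ i, P.getVert i ∈ τ :=
    ⟨P.length, by rw [Walk.getVert_length]; exact ht₀⟩
  set i := Nat.find hex with hi
  have hiτ : P.getVert i ∈ τ := Nat.find_spec hex
  have hlt : ∀ j < i, P.getVert j ∉ τ := fun j hj => Nat.find_min hex hj
  have hi0 : i ≠ 0 := by
    intro h
    rw [h, Walk.getVert_zero] at hiτ
    exact hu hiτ
  have hile : i ≤ P.length := Nat.find_min' hex (by rw [Walk.getVert_length]; exact ht₀)
  have hconst : ∀ j ≤ i,
      pot hT.isConnected A v₀ (P.getVert j) = pot hT.isConnected A v₀ u ∧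
      pot hT.isConnected B v₀ (P.getVert j) = pot hT.isConnected B v₀ u := by
    intro j
    induction j with
    | zero => intro _; rw [Walk.getVert_zero]; exact ⟨rfl, rfl⟩
    | succ j ih =>
      intro hj
      have hadj : G.Adj (P.getVert j) (P.getVert (j + 1)) :=
        P.adj_getVert_succ (by omega)
      have hjτ : P.getVert j ∉ τ := hlt j (by omega)
      have hA0 : A (P.getVert j, P.getVert (j + 1)) = 0 := by
        by_contra h
        exact hjτ (hsuppA _ _ h).2.1
      have hB0 : B (P.getVert j, P.getVert (j + 1)) = 0 := by
        by_contra h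
        exact hjτ (hsuppB _ _ h).2.1
      obtain ⟨ihA, ihB⟩ := ih (by omega)
      constructor
      · rw [pot_adj hT A hantiA v₀ hadj, hA0, ihA, add_zero]
      · rw [pot_adj hT B hantiB v₀ hadj, hB0, ihB, add_zero]
  have hadj' : G.Adj (P.getVert i) (P.getVert (i - 1)) := by
    have h1 : i - 1 + 1 = i := by omega
    have := P.adj_getVert_succ (show i - 1 < P.length by omega)
    rw [h1] at this
    exact this.symm
  exact ⟨P.getVert i, hiτ, ⟨P.getVert (i - 1), hlt (i - 1) (by omega), hadj'⟩,
    (hconst i le_rfl).1, (hconst i le_rfl).2⟩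

lemma aux_iff {V : Type*} (G : SimpleGraph V)
    (hT : G.IsTree) [inst : ∀ v : V, Fintype (G.neighborSet v)]
    (hdeg : ∀ v : V, 2 ≤ G.degree v)
    (A B : V × V → ℤ)
    (hantiA : ∀ u v : V, A (u, v) = -A (v, u))
    (hantiB : ∀ u v : V, B (u, v) = -B (v, u))
    (τ : Finset V) (hτconn : (G.induce (τ : Set V)).Connected)
    (hsuppA : ∀ u v : V, A (u, v) ≠ 0 → G.Adj u v ∧ u ∈ τ ∧ v ∈ τ)
    (hsuppB : ∀ u v : V, B (u, v) ≠ 0 → G.Adj u v ∧ u ∈ τ ∧ v ∈ τ)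
    (sA sB : ℤ) :
    (∃ c : ℤ → V, IsProperBiInfPath G c ∧
        (∑ᶠ n : ℤ, A (c n, c (n + 1))) = sA ∧ (∑ᶠ n : ℤ, B (c n, c (n + 1))) = sB) ↔
    (∃ (m : ℕ) (ξ : ℕ → V),
        (∀ i ≤ m, ξ i ∈ τ) ∧ (∀ i < m, G.Adj (ξ i) (ξ (i + 1))) ∧
        (∃ w, w ∉ τ ∧ G.Adj (ξ 0) w) ∧ (∃ w, w ∉ τ ∧ G.Adj (ξ m) w) ∧
        (∑ i ∈ Finset.range m, A (ξ i, ξ (i + 1))) = sA ∧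
        (∑ i ∈ Finset.range m, B (ξ i, ξ (i + 1))) = sB) := by
  classical
  obtain ⟨⟨t₀, ht₀⟩⟩ := hτconn.nonempty
  set FA := pot hT.isConnected A t₀ with hFAdef
  set FB := pot hT.isConnected B t₀ with hFBdef
  constructor
  · rintro ⟨c, hc, hA, hB⟩
    obtain ⟨N, hN⟩ := hc.2 τ
    have hgA : ∀ n : ℤ, A (c n, c (n + 1)) = FA (c (n + 1)) - FA (c n) := by
      intro n
      rw [hFAdef, pot_adj hT A hantiA t₀ (hc.1 n)]
      ring
    have hgB : ∀ n : ℤ, B (c n, c (n + 1)) = FB (c (n + 1)) - FB (c n) := by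
      intro n
      rw [hFBdef, pot_adj hT B hantiB t₀ (hc.1 n)]
      ring
    have hz0A : ∀ n : ℤ, (N : ℤ) ≤ n → A (c n, c (n + 1)) = 0 := by
      intro n hn
      by_contra h
      exact hN n (le_trans hn (le_abs_self n)) (hsuppA _ _ h).2.1
    have hz1A : ∀ n : ℤ, n < -(N : ℤ) → A (c n, c (n + 1)) = 0 := by
      intro n hn
      by_contra h
      refine hN (n + 1) ?_ (hsuppA _ _ h).2.2
      rw [abs_of_nonpos (by omega)]
      omega
    have hz0B : ∀ n : ℤ, (N : ℤ) ≤ n → B (c n, c (n + 1)) = 0 := by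
      intro n hn
      by_contra h
      exact hN n (le_trans hn (le_abs_self n)) (hsuppB _ _ h).2.1
    have hz1B : ∀ n : ℤ, n < -(N : ℤ) → B (c n, c (n + 1)) = 0 := by
      intro n hn
      by_contra h
      refine hN (n + 1) ?_ (hsuppB _ _ h).2.2
      rw [abs_of_nonpos (by omega)]
      omega
    have hsumA : FA (c N) - FA (c (-(N : ℤ))) = sA := by
      rw [← hA]
      exact (finsum_telescope (fun n => FA (c n)) _ (-(N : ℤ)) N (by omega)
        hgA hz0A hz1A).symm
    have hsumB : FB (c N) - FB (c (-(N : ℤ))) = sB := by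
      rw [← hB]
      exact (finsum_telescope (fun n => FB (c n)) _ (-(N : ℤ)) N (by omega)
        hgB hz0B hz1B).symm
    have hcN : c N ∉ τ := hN N (le_abs_self _)
    have hcmN : c (-(N : ℤ)) ∉ τ := hN (-(N : ℤ)) (by rw [abs_neg]; exact le_abs_self _)
    obtain ⟨v', hv'τ, hv'b, hv'A, hv'B⟩ :=
      boundary_proj hT A B hantiA hantiB τ hsuppA hsuppB t₀ t₀ ht₀ hcN
    obtain ⟨u', hu'τ, hu'b, hu'A, hu'B⟩ :=
      boundary_proj hT A B hantiA hantiB τ hsuppA hsuppB t₀ t₀ ht₀ hcmN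
    obtain ⟨P0⟩ := hτconn.preconnected ⟨u', hu'τ⟩ ⟨v', hv'τ⟩
    let f : G.induce (τ : Set V) →g G := ⟨Subtype.val, fun {a b} hab => hab⟩
    let P : G.Walk u' v' := P0.map f
    have hPsup : ∀ x ∈ P.support, x ∈ τ := by
      intro x hx
      rw [Walk.support_map, List.mem_map] at hx
      obtain ⟨⟨y, hy⟩, _, rfl⟩ := hx
      exact hy
    have hP0 : P.getVert 0 = u' := Walk.getVert_zero P
    have hPm : P.getVert P.length = v' := Walk.getVert_length P
    refine ⟨P.length, P.getVert, ?_, ?_, ?_, ?_, ?_, ?_⟩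
    · intro i hi
      exact hPsup _ (Walk.mem_support_iff_exists_getVert.mpr ⟨i, rfl, hi⟩)
    · intro i hi
      exact P.adj_getVert_succ hi
    · rw [hP0]; exact hu'b
    · rw [hPm]; exact hv'b
    · have hterm : ∀ i ∈ Finset.range P.length, A (P.getVert i, P.getVert (i + 1)) =
          FA (P.getVert (i + 1)) - FA (P.getVert i) := by
        intro i hi
        rw [Finset.mem_range] at hi
        have h := pot_adj hT A hantiA t₀ (P.adj_getVert_succ hi)
        simp only [hFAdef]
        linarith [h]
      calc ∑ i ∈ Finset.range P.length, A (P.getVert i, P.getVert (i + 1))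
          = ∑ i ∈ Finset.range P.length,
              (FA (P.getVert (i + 1)) - FA (P.getVert i)) := Finset.sum_congr rfl hterm
        _ = FA (P.getVert P.length) - FA (P.getVert 0) :=
            Finset.sum_range_sub (fun j => FA (P.getVert j)) P.length
        _ = sA := by
            rw [hP0, hPm, ← hFAdef] at *
            rw [hv'A, hu'A]
            exact hsumA
    · have hterm : ∀ i ∈ Finset.range P.length, B (P.getVert i, P.getVert (i + 1)) =
          FB (P.getVert (i + 1)) - FB (P.getVert i) := by
        intro i hi
        rw [Finset.mem_range] at hi
        have h := pot_adj hT B hantiB t₀ (P.adj_getVert_succ hi)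
        simp only [hFBdef]
        linarith [h]
      calc ∑ i ∈ Finset.range P.length, B (P.getVert i, P.getVert (i + 1))
          = ∑ i ∈ Finset.range P.length,
              (FB (P.getVert (i + 1)) - FB (P.getVert i)) := Finset.sum_congr rfl hterm
        _ = FB (P.getVert P.length) - FB (P.getVert 0) :=
            Finset.sum_range_sub (fun j => FB (P.getVert j)) P.length
        _ = sB := by
            rw [hP0, hPm, ← hFBdef] at *
            rw [hv'B, hu'B]
            exact hsumB
  · rintro ⟨m, ξ, hξτ, hξadj, ⟨w₀, hw₀, hadj₀⟩, ⟨w₁, hw₁, hadj₁⟩, hsA, hsB⟩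
    obtain ⟨rL, hrL0, hrL1, hrLadj, hrLdist, hrLout⟩ :=
      exists_ray hT hdeg τ hτconn (hξτ 0 (Nat.zero_le m)) hw₀ hadj₀
    obtain ⟨rR, hrR0, hrR1, hrRadj, hrRdist, hrRout⟩ :=
      exists_ray hT hdeg τ hτconn (hξτ m le_rfl) hw₁ hadj₁
    set c : ℤ → V := fun n => if n < 0 then rL (-n).toNat
      else if n ≤ (m : ℤ) then ξ n.toNat else rR (n - m).toNat with hcdef
    have hcneg : ∀ n : ℤ, n < 0 → c n = rL (-n).toNat := by
      intro n hn
      simp only [hcdef]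
      rw [if_pos hn]
    have hcmid : ∀ n : ℤ, 0 ≤ n → n ≤ (m : ℤ) → c n = ξ n.toNat := by
      intro n h1 h2
      simp only [hcdef]
      rw [if_neg (by omega), if_pos h2]
    have hcpos : ∀ n : ℤ, (m : ℤ) < n → c n = rR (n - m).toNat := by
      intro n hn
      simp only [hcdef]
      rw [if_neg (by omega), if_neg (by omega)]
    have hcadj : ∀ n : ℤ, G.Adj (c n) (c (n + 1)) := by
      intro n
      rcases lt_trichotomy n (-1) with h | h | h
      · rw [hcneg n (by omega), hcneg (n + 1) (by omega)]
        have hk : (-n).toNat = (-(n + 1)).toNat + 1 := by omega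
        rw [hk]
        exact (hrLadj _).symm
      · subst h
        rw [hcneg (-1) (by omega), show (-1 : ℤ) + 1 = 0 by ring,
          hcmid 0 le_rfl (by exact_mod_cast Nat.zero_le m)]
        have e1 : ((-(-1 : ℤ))).toNat = 1 := by omega
        have e2 : ((0 : ℤ)).toNat = 0 := rfl
        rw [e1, e2]
        have h3 := (hrLadj 0).symm
        rw [hrL0] at h3
        exact h3
      · rcases lt_trichotomy n (m : ℤ) with h2 | h2 | h2
        · rw [hcmid n (by omega) (by omega), hcmid (n + 1) (by omega) (by omega)]
          have : (n + 1).toNat = n.toNat + 1 := by omega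
          rw [this]
          exact hξadj n.toNat (by omega)
        · rw [hcmid n (by omega) (by omega), hcpos (n + 1) (by omega)]
          have e1 : n.toNat = m := by omega
          have e2 : (n + 1 - m).toNat = 1 := by omega
          rw [e1, e2, hrR1]
          exact hadj₁
        · rw [hcpos n h2, hcpos (n + 1) (by omega)]
          have : (n + 1 - m).toNat = (n - m).toNat + 1 := by omega
          rw [this]
          exact hrRadj _
    have hproper : IsProperBiInfPath G c := by
      refine ⟨hcadj, ?_⟩
      intro S
      set D := S.sup (fun x => max (G.dist (ξ 0) x) (G.dist (ξ m) x)) with hD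
      refine ⟨m + D + 1, ?_⟩
      intro n hn hnS
      have hle : max (G.dist (ξ 0) (c n)) (G.dist (ξ m) (c n)) ≤ D :=
        Finset.le_sup (f := fun x => max (G.dist (ξ 0) x) (G.dist (ξ m) x)) hnS
      push_cast at hn
      rcases lt_or_ge n 0 with h | h
      · have h1 : G.dist (ξ 0) (c n) ≤ D := le_trans (le_max_left _ _) hle
        rw [hcneg n h, hrLdist] at h1
        rw [abs_of_neg h] at hn
        omega
      · rcases le_or_gt n (m : ℤ) with h2 | h2
        · rw [abs_of_nonneg h] at hn
          omega
        · have h1 : G.dist (ξ m) (c n) ≤ D := le_trans (le_max_right _ _) hle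
          rw [hcpos n h2, hrRdist] at h1
          rw [abs_of_nonneg h] at hn
          omega
    have hgA : ∀ n : ℤ, A (c n, c (n + 1)) = FA (c (n + 1)) - FA (c n) := by
      intro n
      rw [hFAdef, pot_adj hT A hantiA t₀ (hcadj n)]
      ring
    have hgB : ∀ n : ℤ, B (c n, c (n + 1)) = FB (c (n + 1)) - FB (c n) := by
      intro n
      rw [hFBdef, pot_adj hT B hantiB t₀ (hcadj n)]
      ring
    have houtpos : ∀ n : ℤ, (m : ℤ) ≤ n → c (n + 1) ∉ τ := by
      intro n hn
      rw [hcpos (n + 1) (by omega)]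
      exact hrRout _ (by omega)
    have houtneg : ∀ n : ℤ, n < 0 → c n ∉ τ := by
      intro n hn
      rw [hcneg n hn]
      exact hrLout _ (by omega)
    have hz0A : ∀ n : ℤ, (m : ℤ) ≤ n → A (c n, c (n + 1)) = 0 := by
      intro n hn
      by_contra h
      exact houtpos n hn (hsuppA _ _ h).2.2
    have hz1A : ∀ n : ℤ, n < 0 → A (c n, c (n + 1)) = 0 := by
      intro n hn
      by_contra h
      exact houtneg n hn (hsuppA _ _ h).2.1
    have hz0B : ∀ n : ℤ, (m : ℤ) ≤ n → B (c n, c (n + 1)) = 0 := by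
      intro n hn
      by_contra h
      exact houtpos n hn (hsuppB _ _ h).2.2
    have hz1B : ∀ n : ℤ, n < 0 → B (c n, c (n + 1)) = 0 := by
      intro n hn
      by_contra h
      exact houtneg n hn (hsuppB _ _ h).2.1
    have hc0 : c 0 = ξ 0 := by
      rw [hcmid 0 le_rfl (by exact_mod_cast Nat.zero_le m)]
      rfl
    have hcm : c (m : ℤ) = ξ m := by
      rw [hcmid (m : ℤ) (by exact_mod_cast Nat.zero_le m) le_rfl]
      norm_num
    have htelA : FA (ξ m) - FA (ξ 0) = sA := by
      have hterm : ∀ i ∈ Finset.range m, A (ξ i, ξ (i + 1)) =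
          FA (ξ (i + 1)) - FA (ξ i) := by
        intro i hi
        rw [Finset.mem_range] at hi
        have h := pot_adj hT A hantiA t₀ (hξadj i hi)
        simp only [hFAdef]
        linarith [h]
      have hcalc : ∑ i ∈ Finset.range m, A (ξ i, ξ (i + 1)) = FA (ξ m) - FA (ξ 0) :=
        calc ∑ i ∈ Finset.range m, A (ξ i, ξ (i + 1))
          = ∑ i ∈ Finset.range m, (FA (ξ (i + 1)) - FA (ξ i)) :=
            Finset.sum_congr rfl hterm
        _ = FA (ξ m) - FA (ξ 0) := Finset.sum_range_sub (fun j => FA (ξ j)) m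
      rw [← hsA]
      exact hcalc.symm
    have htelB : FB (ξ m) - FB (ξ 0) = sB := by
      have hterm : ∀ i ∈ Finset.range m, B (ξ i, ξ (i + 1)) =
          FB (ξ (i + 1)) - FB (ξ i) := by
        intro i hi
        rw [Finset.mem_range] at hi
        have h := pot_adj hT B hantiB t₀ (hξadj i hi)
        simp only [hFBdef]
        linarith [h]
      have hcalc : ∑ i ∈ Finset.range m, B (ξ i, ξ (i + 1)) = FB (ξ m) - FB (ξ 0) :=
        calc ∑ i ∈ Finset.range m, B (ξ i, ξ (i + 1))
          = ∑ i ∈ Finset.range m, (FB (ξ (i + 1)) - FB (ξ i)) :=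
            Finset.sum_congr rfl hterm
        _ = FB (ξ m) - FB (ξ 0) := Finset.sum_range_sub (fun j => FB (ξ j)) m
      rw [← hsB]
      exact hcalc.symm
    refine ⟨c, hproper, ?_, ?_⟩
    · rw [finsum_telescope (fun n => FA (c n)) _ 0 (m : ℤ)
        (by exact_mod_cast Nat.zero_le m) hgA hz0A hz1A]
      rw [hcm, hc0]
      exact htelA
    · rw [finsum_telescope (fun n => FB (c n)) _ 0 (m : ℤ)
        (by exact_mod_cast Nat.zero_le m) hgB hz0B hz1B]
      rw [hcm, hc0]
      exact htelB

end TreeDisj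

/-- Finiteness reduction for the disjointness criterion: there exist bi-infinite
proper paths `c`, `c'` with `c·A = 1 = c·B` and `c'·A = 1 = -c'·B` iff there
exist finite edge paths `ξ`, `ξ'` in `τ` with endpoints on the boundary of `τ`
with the same intersection numbers. -/
theorem disjointness_criterion_finite_check {V : Type*} (G : SimpleGraph V)
    (hT : G.IsTree) [∀ v : V, Fintype (G.neighborSet v)]
    (hdeg : ∀ v : V, 2 ≤ G.degree v)
    (A B : V × V → ℤ)
    (hantiA : ∀ u v : V, A (u, v) = -A (v, u))
    (hantiB : ∀ u v : V, B (u, v) = -B (v, u))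
    (hvalA : ∀ c : ℤ → V, IsProperBiInfPath G c →
      (∑ᶠ n : ℤ, A (c n, c (n + 1))) ∈ ({-1, 0, 1} : Set ℤ))
    (hvalB : ∀ c : ℤ → V, IsProperBiInfPath G c →
      (∑ᶠ n : ℤ, B (c n, c (n + 1))) ∈ ({-1, 0, 1} : Set ℤ))
    (τ : Finset V) (hτconn : (G.induce (τ : Set V)).Connected)
    (hsuppA : ∀ u v : V, A (u, v) ≠ 0 → G.Adj u v ∧ u ∈ τ ∧ v ∈ τ)
    (hsuppB : ∀ u v : V, B (u, v) ≠ 0 → G.Adj u v ∧ u ∈ τ ∧ v ∈ τ) :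
    ((∃ c : ℤ → V, IsProperBiInfPath G c ∧
        (∑ᶠ n : ℤ, A (c n, c (n + 1))) = 1 ∧ (∑ᶠ n : ℤ, B (c n, c (n + 1))) = 1) ∧
      (∃ c' : ℤ → V, IsProperBiInfPath G c' ∧
        (∑ᶠ n : ℤ, A (c' n, c' (n + 1))) = 1 ∧
          (∑ᶠ n : ℤ, B (c' n, c' (n + 1))) = -1)) ↔
    ((∃ (m : ℕ) (ξ : ℕ → V),
        (∀ i ≤ m, ξ i ∈ τ) ∧ (∀ i < m, G.Adj (ξ i) (ξ (i + 1))) ∧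
        (∃ w, w ∉ τ ∧ G.Adj (ξ 0) w) ∧ (∃ w, w ∉ τ ∧ G.Adj (ξ m) w) ∧
        (∑ i ∈ Finset.range m, A (ξ i, ξ (i + 1))) = 1 ∧
        (∑ i ∈ Finset.range m, B (ξ i, ξ (i + 1))) = 1) ∧
      (∃ (m' : ℕ) (ξ' : ℕ → V),
        (∀ i ≤ m', ξ' i ∈ τ) ∧ (∀ i < m', G.Adj (ξ' i) (ξ' (i + 1))) ∧
        (∃ w, w ∉ τ ∧ G.Adj (ξ' 0) w) ∧ (∃ w, w ∉ τ ∧ G.Adj (ξ' m') w) ∧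
        (∑ i ∈ Finset.range m', A (ξ' i, ξ' (i + 1))) = 1 ∧
        (∑ i ∈ Finset.range m', B (ξ' i, ξ' (i + 1))) = -1)) := by
  exact and_congr
    (TreeDisj.aux_iff G hT hdeg A B hantiA hantiB τ hτconn hsuppA hsuppB 1 1)
    (TreeDisj.aux_iff G hT hdeg A B hantiA hantiB τ hτconn hsuppA hsuppB 1 (-1))
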